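/- The point (X*, Y*, Z*) with X* = (1 + R₀ D₀)/(R₀ (1 + D₀)), Y* = (μ_h/(μ_h+γ))(1 − X*), Z* = D₀ (1 − X*)/X* is an equilibrium of the system X' = μ_h(1−X) − δXZ, Y' = δXZ − (μ_h+γ)Y, Z' = σ(1−Z)Y − μ_v Z, i.e., all three right-hand sides vanish at this point. -/

import Mathlib

theorem endemic_equilibrium_is_equilibrium
    (μh μv γ δ σ : ℝ) (hμh : 0 < μh) (hμv : 0 < μv) (hγ : 0 < γ)
    (hδ : 0 < δ) (hσ : 0 < σ)
    (R₀ D₀ Xs Ys Zs : ℝ)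
    (hR₀ : R₀ = σ * δ / (μv * (μh + γ)))
    (hD₀ : D₀ = μh / δ)
    (hR₀gt : 1 < R₀)
    (hXs : Xs = (1 + R₀ * D₀) / (R₀ * (1 + D₀)))
    (hYs : Ys = μh / (μh + γ) * (1 - Xs))
    (hZs : Zs = D₀ * (1 - Xs) / Xs) :
    μh * (1 - Xs) - δ * Xs * Zs = 0 ∧
    δ * Xs * Zs - (μh + γ) * Ys = 0 ∧
    σ * (1 - Zs) * Ys - μv * Zs = 0 := by
  have hR₀pos : 0 < R₀ := lt_trans one_pos hR₀gt
  have hD₀pos : 0 < D₀ := hD₀ ▸ div_pos hμh hδ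
  have hXspos : 0 < Xs := by
    rw [hXs]
    positivity
  have hXsne : Xs ≠ 0 := ne_of_gt hXspos
  have hμγ : μh + γ ≠ 0 := by positivity
  have hμv' : μv ≠ 0 := ne_of_gt hμv
  subst hR₀ hD₀ hYs hZs
  have hδ' : δ ≠ 0 := ne_of_gt hδ
  refine ⟨?_, ?_, ?_⟩
  · field_simp
    ring
  · field_simp
    ring
  · rw [hXs]
    rw [hXs] at hXsne
    field_simp at hXsne ⊢
    ring
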